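/- Let S_τ = (I - τA)^{-1} for τ > 0. Then for any 0 ≤ κ ≤ 1 and any integer j ≥ 1, the operator norm satisfies |(-A)^{1-κ} S_τ^j| ≤ (jτ)^{-(1-κ)} (1 + λ₀ τ)^{-jκ}. -/

import Mathlib

open scoped RealInnerProductSpace

/-- Diagonal coefficient bound gives operator norm bound. -/
lemma diag_opNorm_le
    {H : Type*} [NormedAddCommGroup H] [InnerProductSpace ℝ H] [CompleteSpace H]
    (b : HilbertBasis ℕ ℝ H) (R : H →L[ℝ] H) (c : ℕ → ℝ) (C : ℝ) (hC : 0 ≤ C)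
    (hR : ∀ k, R (b k) = c k • b k) (hc : ∀ k, |c k| ≤ C) : ‖R‖ ≤ C := by
  apply R.opNorm_le_bound hC
  intro x
  have key : ∀ k, ⟪b k, R x⟫ = c k * ⟪b k, x⟫ := by
    intro k
    have h1 : HasSum (fun i => (b.repr x i * c i) • b i) (R x) := by
      have := (b.hasSum_repr x).mapL R
      convert this using 2 with i
      rw [ContinuousLinearMap.map_smul, hR i, smul_smul, mul_comm]
    have h2 : HasSum (fun i => ⟪b k, (b.repr x i * c i) • b i⟫) ⟪b k, R x⟫ := by
      have := h1.mapL (innerSL ℝ (b k))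
      exact this
    have h3 : (fun i => ⟪b k, (b.repr x i * c i) • b i⟫) =
        fun i => if i = k then c k * ⟪b k, x⟫ else 0 := by
      funext i
      rw [real_inner_smul_right]
      rcases eq_or_ne i k with rfl | hik
      · simp [orthonormal_iff_ite.mp b.orthonormal i i, b.repr_apply_apply, mul_comm, b.orthonormal.1 i]
      · simp [orthonormal_iff_ite.mp b.orthonormal k i, hik, (Ne.symm hik)]
    rw [h3] at h2
    exact h2.unique (hasSum_ite_eq k _)
  have hsum1 : HasSum (fun k => ⟪R x, b k⟫ * ⟪b k, R x⟫) ⟪R x, R x⟫ :=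
    b.hasSum_inner_mul_inner (R x) (R x)
  have hsum2 : HasSum (fun k => ⟪x, b k⟫ * ⟪b k, x⟫) ⟪x, x⟫ :=
    b.hasSum_inner_mul_inner x x
  have hRx2 : ‖R x‖ ^ 2 = ∑' k, (c k * ⟪b k, x⟫) ^ 2 := by
    rw [← real_inner_self_eq_norm_sq, ← hsum1.tsum_eq]
    congr 1; funext k
    rw [real_inner_comm (b k) (R x), key k]; ring
  have hx2 : ‖x‖ ^ 2 = ∑' k, ⟪b k, x⟫ ^ 2 := by
    rw [← real_inner_self_eq_norm_sq, ← hsum2.tsum_eq]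
    congr 1; funext k
    rw [real_inner_comm (b k) x]; ring
  have hS2 : Summable (fun k => ⟪b k, x⟫ ^ 2) := by
    have := (b.summable_inner_mul_inner x x)
    refine this.congr (fun k => ?_)
    rw [real_inner_comm (b k) x]; ring
  have hle : ‖R x‖ ^ 2 ≤ C ^ 2 * ‖x‖ ^ 2 := by
    rw [hRx2, hx2, ← tsum_mul_left]
    apply Summable.tsum_le_tsum
    · intro k
      rw [mul_pow]
      apply mul_le_mul_of_nonneg_right _ (sq_nonneg _)
      calc c k ^ 2 = |c k| ^ 2 := (sq_abs _).symm
        _ ≤ C ^ 2 := by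
            apply pow_le_pow_left₀ (abs_nonneg _) (hc k)
    · have hS1 : Summable (fun k => (c k * ⟪b k, x⟫) ^ 2) := by
        apply Summable.of_nonneg_of_le (fun k => sq_nonneg _) (fun k => ?_) (hS2.mul_left (C^2))
        rw [mul_pow]
        apply mul_le_mul_of_nonneg_right _ (sq_nonneg _)
        calc c k ^ 2 = |c k| ^ 2 := (sq_abs _).symm
          _ ≤ C ^ 2 := pow_le_pow_left₀ (abs_nonneg _) (hc k) 2
      exact hS1
    · exact hS2.mul_left _
  calc ‖R x‖ = Real.sqrt (‖R x‖ ^ 2) := (Real.sqrt_sq (norm_nonneg _)).symm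
    _ ≤ Real.sqrt ((C * ‖x‖) ^ 2) := Real.sqrt_le_sqrt (by rw [mul_pow]; exact hle)
    _ = C * ‖x‖ := Real.sqrt_sq (by positivity)

theorem stmt3
    {H : Type*} [NormedAddCommGroup H] [InnerProductSpace ℝ H] [CompleteSpace H]
    (b : HilbertBasis ℕ ℝ H) (lam : ℕ → ℝ)
    (hpos : ∀ k, 0 < lam k) (hmono : Monotone lam) :
    ∀ κ : ℝ, 0 ≤ κ → κ ≤ 1 → ∀ τ : ℝ, 0 < τ → ∀ j : ℕ, 1 ≤ j →
      ∀ R : H →L[ℝ] H,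
        (∀ k, R (b k) = ((lam k ^ ((1:ℝ) - κ)) * ((1 + lam k * τ)⁻¹) ^ j) • b k) →
        ‖R‖ ≤ ((j : ℝ) * τ) ^ (κ - 1) * (1 + lam 0 * τ) ^ (-(j : ℝ) * κ) := by
  intro κ hκ0 hκ1 τ hτ j hj R hR
  have hj0 : (0:ℝ) < (j:ℝ) := by exact_mod_cast hj
  have hjτ : (0:ℝ) < (j:ℝ) * τ := by positivity
  have hl0 : (0:ℝ) < 1 + lam 0 * τ := by have := hpos 0; positivity
  set C : ℝ := ((j : ℝ) * τ) ^ (κ - 1) * (1 + lam 0 * τ) ^ (-(j : ℝ) * κ) with hCdef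
  have hC : 0 ≤ C := by positivity
  apply diag_opNorm_le b R _ C hC hR
  intro k
  set l : ℝ := lam k with hl
  have hlpos : 0 < l := hpos k
  have hl0k : lam 0 ≤ l := hmono (Nat.zero_le k)
  have ha : (1:ℝ) < 1 + l * τ := by nlinarith
  have ha0 : (0:ℝ) < 1 + l * τ := by linarith
  have hck : 0 ≤ l ^ ((1:ℝ) - κ) * ((1 + l * τ)⁻¹) ^ j := by positivity
  rw [abs_of_nonneg hck]
  -- rewrite the nat power of inverse as an rpow
  have hinv : ((1 + l * τ)⁻¹) ^ j = (1 + l * τ) ^ (-(j:ℝ)) := by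
    rw [Real.rpow_neg ha0.le, Real.rpow_natCast, inv_pow]
  have hsplit : (1 + l * τ) ^ (-(j:ℝ)) =
      (1 + l * τ) ^ (-(j:ℝ) * (1 - κ)) * (1 + l * τ) ^ (-(j:ℝ) * κ) := by
    rw [← Real.rpow_add ha0]
    ring_nf
  -- Bernoulli: (1 + lτ)^j ≥ 1 + j l τ
  have hbern : 1 + (j:ℝ) * (l * τ) ≤ (1 + l * τ) ^ j := by
    have := one_add_mul_le_pow (a := l * τ) (by nlinarith) j
    linarith
  have hjlt : (j:ℝ) * τ * l ≤ (1 + l * τ) ^ j := by nlinarith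
  -- first factor bound
  have hfac1 : l ^ ((1:ℝ) - κ) * (1 + l * τ) ^ (-(j:ℝ) * (1 - κ)) ≤ ((j:ℝ) * τ) ^ (κ - 1) := by
    have h1 : (1 + l * τ) ^ (-(j:ℝ) * (1 - κ)) = ((1 + l * τ) ^ (-(j:ℝ))) ^ ((1:ℝ) - κ) := by
      rw [← Real.rpow_mul ha0.le]
    have h2 : l ^ ((1:ℝ) - κ) * ((1 + l * τ) ^ (-(j:ℝ))) ^ ((1:ℝ) - κ)
        = (l * (1 + l * τ) ^ (-(j:ℝ))) ^ ((1:ℝ) - κ) := by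
      rw [← Real.mul_rpow hlpos.le (by positivity)]
    have h3 : l * (1 + l * τ) ^ (-(j:ℝ)) ≤ ((j:ℝ) * τ)⁻¹ := by
      rw [← hinv, inv_pow, ← division_def]
      rw [div_le_iff₀ (by positivity)]
      calc l = (j:ℝ) * τ * l * ((j:ℝ) * τ)⁻¹ := by field_simp
        _ ≤ (1 + l * τ) ^ j * ((j:ℝ) * τ)⁻¹ := by
            apply mul_le_mul_of_nonneg_right hjlt (by positivity)
        _ = ((j:ℝ) * τ)⁻¹ * (1 + l * τ) ^ j := mul_comm _ _
    have h4 : (l * (1 + l * τ) ^ (-(j:ℝ))) ^ ((1:ℝ) - κ) ≤ (((j:ℝ) * τ)⁻¹) ^ ((1:ℝ) - κ) :=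
      Real.rpow_le_rpow (by positivity) h3 (by linarith)
    have h5 : (((j:ℝ) * τ)⁻¹) ^ ((1:ℝ) - κ) = ((j:ℝ) * τ) ^ (κ - 1) := by
      rw [Real.inv_rpow hjτ.le, ← Real.rpow_neg hjτ.le]
      congr 1; ring
    rw [h1, h2, ← h5]
    exact h4
  -- second factor bound
  have hfac2 : (1 + l * τ) ^ (-(j:ℝ) * κ) ≤ (1 + lam 0 * τ) ^ (-(j:ℝ) * κ) := by
    apply Real.rpow_le_rpow_of_nonpos hl0
    · nlinarith
    · have : 0 ≤ (j:ℝ) * κ := by positivity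
      linarith
  calc l ^ ((1:ℝ) - κ) * ((1 + l * τ)⁻¹) ^ j
      = (l ^ ((1:ℝ) - κ) * (1 + l * τ) ^ (-(j:ℝ) * (1 - κ))) * (1 + l * τ) ^ (-(j:ℝ) * κ) := by
        rw [hinv, hsplit]; ring
    _ ≤ ((j:ℝ) * τ) ^ (κ - 1) * (1 + lam 0 * τ) ^ (-(j:ℝ) * κ) := by
        apply mul_le_mul hfac1 hfac2 (by positivity) (by positivity)
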